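/- For any N_1, N_2 ∈ ℕ+, given N_1(N_2+1) + 1 samples (x_i, y_i) ∈ ℝ² with x_0 < x_1 < ⋯ < x_{N_1(N_2+1)} and y_i ≥ 0 for all i, there exists a function φ : ℝ → ℝ implemented by a ReLU FNN with exactly two hidden layers, of widths 2N_1 and 2N_2+1 respectively, such that: (1) φ(x_i) = y_i for every i = 0, 1, …, N_1(N_2+1); and (2) φ is affine on each interval [x_{i−1}, x_i] for every i ∈ {1, …, N_1(N_2+1)} that does not lie in the set {(N_2+1)j : j = 1, 2, …, N_1}. -/

import Mathlib

open Real

noncomputable section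

/-- `A` is an affine map from `ℝ^m` to `ℝ^n`. -/
def IsAffineMap (m n : ℕ) (A : (Fin m → ℝ) → (Fin n → ℝ)) : Prop :=
  ∃ (M : Matrix (Fin n) (Fin m) ℝ) (b : Fin n → ℝ), ∀ x, A x = M.mulVec x + b

/-- `φ : ℝ^d → ℝ` is realized by a ReLU network with exactly `L'` hidden layers,
each of positive width at most `W`. -/
def ReLUNetRec (W : ℝ) : ℕ → ∀ d : ℕ, ((Fin d → ℝ) → ℝ) → Prop
  | 0, d, φ => ∃ A : (Fin d → ℝ) → (Fin 1 → ℝ), IsAffineMap d 1 A ∧ ∀ x, φ x = A x 0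
  | L' + 1, d, φ => ∃ n : ℕ, 0 < n ∧ (n : ℝ) ≤ W ∧
      ∃ A : (Fin d → ℝ) → (Fin n → ℝ), IsAffineMap d n A ∧
        ∃ ψ : (Fin n → ℝ) → ℝ, ReLUNetRec W L' n ψ ∧
          ∀ x, φ x = ψ (fun i => max (A x i) 0)

/-- `φ : ℝ^d → ℝ` is implemented by a ReLU FNN with width at most `W` and depth at most `D`. -/
def ImplementedBy (d : ℕ) (W D : ℝ) (φ : (Fin d → ℝ) → ℝ) : Prop :=
  ∃ L' : ℕ, (L' : ℝ) ≤ D ∧ ReLUNetRec W L' d φ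

/-- one-dimensional-input version of `ImplementedBy`. -/
def ImplementedBy1 (W D : ℝ) (φ : ℝ → ℝ) : Prop :=
  ImplementedBy 1 W D (fun x => φ (x 0))

/-- two-dimensional-input version of `ImplementedBy`. -/
def ImplementedBy2 (W D : ℝ) (φ : ℝ → ℝ → ℝ) : Prop :=
  ImplementedBy 2 W D (fun x => φ (x 0) (x 1))

/-- `φ : ℝ^d → ℝ` is implemented by a ReLU FNN with exactly two hidden layers,
of widths `w₁` and `w₂` respectively. -/
def TwoHiddenLayerNet (d w₁ w₂ : ℕ) (φ : (Fin d → ℝ) → ℝ) : Prop :=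
  ∃ (A₀ : (Fin d → ℝ) → (Fin w₁ → ℝ)) (A₁ : (Fin w₁ → ℝ) → (Fin w₂ → ℝ))
    (A₂ : (Fin w₂ → ℝ) → (Fin 1 → ℝ)),
    IsAffineMap d w₁ A₀ ∧ IsAffineMap w₁ w₂ A₁ ∧ IsAffineMap w₂ 1 A₂ ∧
    ∀ x, φ x = A₂ (fun j => max (A₁ (fun i => max (A₀ x i) 0) j) 0) 0

namespace PF

variable (N₁ N₂ : ℕ) (x y : ℕ → ℝ)

/-- slope of segment `[x i, x (i+1)]`. -/
def sl (i : ℕ) : ℝ := (y (i+1) - y i) / (x (i+1) - x i)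

/-- slope change at the `k`-th interior kink of block `J`. -/
def hk (J k : ℕ) : ℝ := sl x y (J*(N₂+1)+k+1) - sl x y (J*(N₂+1)+k)

/-- per-unit, per-block affine function, as (slope, intercept). -/
def gU (m J : ℕ) : ℝ × ℝ :=
  if m = 0 then (sl x y (J*(N₂+1)), y (J*(N₂+1)) - sl x y (J*(N₂+1)) * x (J*(N₂+1)))
  else if m = 1 then (-sl x y (J*(N₂+1)), -(y (J*(N₂+1)) - sl x y (J*(N₂+1)) * x (J*(N₂+1))))
  else if m = 2*N₂ then (0, 0)
  else if m % 2 = 0 then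
    (max (hk N₂ x y J ((m-2)/2)) 0, -(max (hk N₂ x y J ((m-2)/2)) 0 * x (J*(N₂+1)+(m-2)/2+1)))
  else
    (max (-hk N₂ x y J ((m-2)/2)) 0, -(max (-hk N₂ x y J ((m-2)/2)) 0 * x (J*(N₂+1)+(m-2)/2+1)))

/-- target value of unit `m` at the last sample `x M`. -/
def tgt (m : ℕ) : ℝ := if m = 0 then y (N₁*(N₂+1)) else if m = 1 then -y (N₁*(N₂+1)) else 0

/-- bias of unit `m`: value of its block-0 affine function at `x N₂`. -/
def cst (m : ℕ) : ℝ := (gU N₂ x y m 0).1 * x N₂ + (gU N₂ x y m 0).2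

/-- modified per-block affine: block 0 replaced by the constant `cst m`. -/
def Gt (m J : ℕ) : ℝ × ℝ := if J = 0 then (0, cst N₂ x y m) else gU N₂ x y m J

def upt (j : ℕ) : ℝ := x (j*(N₂+1))
def wpt (j : ℕ) : ℝ := x (j*(N₂+1)+N₂)

/-- difference of per-block affines between steps `j-1` and `j` (used for `j ≥ 1`). -/
def Dp (m j : ℕ) : ℝ × ℝ :=
  ((gU N₂ x y m j).1 - (Gt N₂ x y m (j-1)).1, (gU N₂ x y m j).2 - (Gt N₂ x y m (j-1)).2)

/-- second-layer weight on neuron `A_j` (even first-layer index `2j`). -/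
def alf (m j : ℕ) : ℝ :=
  if j = 0 then -(gU N₂ x y m 0).1
  else ((Dp N₂ x y m j).1 * wpt N₂ x (j-1) + (Dp N₂ x y m j).2) / (wpt N₂ x (j-1) - upt N₂ x j)

/-- second-layer weight on neuron `B_j` (odd first-layer index `2j+1`). -/
def bet (m j : ℕ) : ℝ :=
  if j = N₁ - 1 then
    (tgt N₁ N₂ y m - ((Gt N₂ x y m j).1 * x (N₁*(N₂+1)) + (Gt N₂ x y m j).2)) /
      (x (N₁*(N₂+1)) - wpt N₂ x j)
  else ((Dp N₂ x y m (j+1)).1 * upt N₂ x (j+1) + (Dp N₂ x y m (j+1)).2) /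
      (upt N₂ x (j+1) - wpt N₂ x j)

/-- first-layer pre-activation of neuron `i` at input `t`. -/
def nu (i : ℕ) (t : ℝ) : ℝ :=
  if i % 2 = 0 then (if i/2 = 0 then x N₂ - t else t - upt N₂ x (i/2)) else t - wpt N₂ x (i/2)

/-- second-layer pre-activation of unit `m`. -/
def P (m : ℕ) (t : ℝ) : ℝ :=
  cst N₂ x y m + ∑ i ∈ Finset.range (2*N₁),
    (if i % 2 = 0 then alf N₂ x y m (i/2) else bet N₁ N₂ x y m (i/2)) * max (nu N₂ x i t) 0

/-- the network output. -/
def phi (t : ℝ) : ℝ :=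
  ∑ m ∈ Finset.range (2*N₂+1), (if m % 2 = 0 then (1:ℝ) else -1) * max (P N₁ N₂ x y m t) 0

/-- the target CPWL function on block `J`. -/
def fB (J : ℕ) (t : ℝ) : ℝ :=
  y (J*(N₂+1)) + sl x y (J*(N₂+1)) * (t - x (J*(N₂+1)))
  + ∑ k ∈ Finset.range (N₂-1), hk N₂ x y J k * max (t - x (J*(N₂+1)+k+1)) 0

section lemmas

lemma mono_lt (hx : ∀ i : ℕ, i < N₁ * (N₂ + 1) → x i < x (i + 1)) : ∀ i j : ℕ, i < j → j ≤ N₁*(N₂+1) → x i < x j := by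
  intro i j hij hj
  induction j with
  | zero => omega
  | succ n ih =>
    rcases Nat.lt_succ_iff_lt_or_eq.mp hij with h | h
    · exact lt_trans (ih h (by omega)) (hx n (by omega))
    · subst h; exact hx i (by omega)

lemma mono_le (hx : ∀ i : ℕ, i < N₁ * (N₂ + 1) → x i < x (i + 1)) : ∀ i j : ℕ, i ≤ j → j ≤ N₁*(N₂+1) → x i ≤ x j := by
  intro i j hij hj
  rcases eq_or_lt_of_le hij with h | h
  · subst h; rfl
  · exact le_of_lt (mono_lt N₁ N₂ x hx i j h hj)

lemma sum_pair (K : ℕ) (h : ℕ → ℝ) :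
    ∑ i ∈ Finset.range (2*K), h i = ∑ j ∈ Finset.range K, (h (2*j) + h (2*j+1)) := by
  induction K with
  | zero => simp
  | succ n ih =>
    have : 2*(n+1) = (2*n+1)+1 := by ring
    rw [this, Finset.sum_range_succ, Finset.sum_range_succ, ih, Finset.sum_range_succ]
    ring

lemma relu_pair (s v : ℝ) :
    max (max s 0 * v) 0 - max (max (-s) 0 * v) 0 = s * max v 0 := by
  rcases le_total s 0 with h | h
  · have h2 : max (-s) 0 = -s := max_eq_left (by linarith)
    have h3 : (-s) * max v 0 = max ((-s)*v) 0 := by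
      rw [mul_max_of_nonneg _ _ (by linarith : (0:ℝ) ≤ -s), mul_zero]
    rw [max_eq_right h, h2, zero_mul, ← h3]
    simp only [max_self]
    ring
  · have h2 : max s 0 = s := max_eq_left h
    have h3 : s * max v 0 = max (s*v) 0 := by
      rw [mul_max_of_nonneg _ _ h, mul_zero]
    rw [max_eq_right (by linarith : -s ≤ 0), h2, zero_mul, h3]
    simp

lemma max_sub_max_neg (a : ℝ) : max a 0 - max (-a) 0 = a := by
  rcases le_total a 0 with h | h
  · rw [max_eq_right h, max_eq_left (by linarith)]; ring
  · rw [max_eq_left h, max_eq_right (by linarith)]; ring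

lemma blk_le {J : ℕ} (hJ : J < N₁) : J*(N₂+1)+N₂+1 ≤ N₁*(N₂+1) := by
  have h1 : (J+1)*(N₂+1) ≤ N₁*(N₂+1) := Nat.mul_le_mul_right _ hJ
  calc J*(N₂+1)+N₂+1 = (J+1)*(N₂+1) := by ring
    _ ≤ N₁*(N₂+1) := h1

lemma linid (m : ℕ) (hx : ∀ i : ℕ, i < N₁ * (N₂ + 1) → x i < x (i + 1)) : ∀ J, J ≤ N₁ - 1 → ∀ t : ℝ,
    ((∑ j ∈ Finset.range J, alf N₂ x y m (j+1) * (t - upt N₂ x (j+1)))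
      + ∑ j ∈ Finset.range J, bet N₁ N₂ x y m j * (t - wpt N₂ x j))
    = (Gt N₂ x y m J).1 * t + (Gt N₂ x y m J).2 - cst N₂ x y m := by
  intro J
  induction J with
  | zero => intro _ t; simp [Gt]
  | succ J ih =>
    intro hJ t
    have ihh := ih (by omega) t
    rw [Finset.sum_range_succ, Finset.sum_range_succ]
    have hmul : (J+1)*(N₂+1) ≤ N₁*(N₂+1) := Nat.mul_le_mul_right _ (by omega)
    have e : (J+1)*(N₂+1) = J*(N₂+1)+(N₂+1) := by ring
    have hlt : x (J*(N₂+1)+N₂) < x ((J+1)*(N₂+1)) :=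
      mono_lt N₁ N₂ x hx _ _ (by omega) hmul
    have hne : wpt N₂ x J - upt N₂ x (J+1) ≠ 0 := by
      simp only [wpt, upt]; intro h; nlinarith
    have hne' : upt N₂ x (J+1) - wpt N₂ x J ≠ 0 := by
      simp only [wpt, upt]; intro h; nlinarith
    have key : alf N₂ x y m (J+1) * (t - upt N₂ x (J+1))
        + bet N₁ N₂ x y m J * (t - wpt N₂ x J)
        = ((gU N₂ x y m (J+1)).1 * t + (gU N₂ x y m (J+1)).2)
          - ((Gt N₂ x y m J).1 * t + (Gt N₂ x y m J).2) := by
      rw [alf, if_neg (Nat.succ_ne_zero J), bet, if_neg (show J ≠ N₁-1 by omega)]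
      simp only [Nat.add_sub_cancel, Dp]
      field_simp
      ring
    rw [show Gt N₂ x y m (J+1) = gU N₂ x y m (J+1) from if_neg (Nat.succ_ne_zero J)]
    linarith [ihh, key]

lemma blockP (m J : ℕ) (hx : ∀ i : ℕ, i < N₁ * (N₂ + 1) → x i < x (i + 1)) (hN₁ : 0 < N₁) (hJ : J < N₁) (t : ℝ)
    (h1 : x (J*(N₂+1)) ≤ t) (h2 : t ≤ x (J*(N₂+1)+N₂)) :
    P N₁ N₂ x y m t = (gU N₂ x y m J).1 * t + (gU N₂ x y m J).2 := by
  have hmulJ : J*(N₂+1) ≤ N₁*(N₂+1) := Nat.mul_le_mul_right _ (le_of_lt hJ)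
  have hblkJ : J*(N₂+1)+N₂+1 ≤ N₁*(N₂+1) := blk_le N₁ N₂ hJ
  rw [P, sum_pair]
  have hsum : ∀ j ∈ Finset.range N₁,
      ((if (2*j) % 2 = 0 then alf N₂ x y m ((2*j)/2) else bet N₁ N₂ x y m ((2*j)/2))
          * max (nu N₂ x (2*j) t) 0
       + (if (2*j+1) % 2 = 0 then alf N₂ x y m ((2*j+1)/2) else bet N₁ N₂ x y m ((2*j+1)/2))
          * max (nu N₂ x (2*j+1) t) 0)
      = ((if j = 0 then (if J = 0 then alf N₂ x y m 0 * (x N₂ - t) else 0)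
          else (if j ≤ J then alf N₂ x y m j * (t - upt N₂ x j) else 0))
         + (if j < J then bet N₁ N₂ x y m j * (t - wpt N₂ x j) else 0)) := by
    intro j hj
    have hjN : j < N₁ := Finset.mem_range.mp hj
    have e0 : (2*j) % 2 = 0 := by omega
    have e1 : (2*j)/2 = j := by omega
    have e2 : ¬((2*j+1) % 2 = 0) := by omega
    have e3 : (2*j+1)/2 = j := by omega
    have hjmul : j*(N₂+1)+N₂+1 ≤ N₁*(N₂+1) := blk_le N₁ N₂ hjN
    have hjmul2 : j*(N₂+1) ≤ N₁*(N₂+1) := Nat.mul_le_mul_right _ (le_of_lt hjN)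
    rw [nu, nu, e1, e3, if_pos e0, if_pos e0, if_neg e2, if_neg e2]
    congr 1
    · -- A part
      by_cases hj0 : j = 0
      · subst hj0
        rw [if_pos rfl, if_pos rfl]
        by_cases hJ0 : J = 0
        · subst hJ0
          rw [if_pos rfl]
          have : t ≤ x N₂ := by simpa using h2
          rw [max_eq_left (by linarith)]
        · rw [if_neg hJ0]
          have hN : N₂+1 ≤ J*(N₂+1) := Nat.le_mul_of_pos_left _ (by omega)
          have : x N₂ < x (J*(N₂+1)) := mono_lt N₁ N₂ x hx _ _ (by omega) hmulJ
          rw [max_eq_right (by linarith)]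
          ring
      · rw [if_neg hj0, if_neg hj0]
        by_cases hjJ : j ≤ J
        · rw [if_pos hjJ]
          have h5 : j*(N₂+1) ≤ J*(N₂+1) := Nat.mul_le_mul_right _ hjJ
          have : x (j*(N₂+1)) ≤ x (J*(N₂+1)) := mono_le N₁ N₂ x hx _ _ h5 hmulJ
          rw [upt, max_eq_left (by linarith)]
        · rw [if_neg hjJ]
          have h5 : (J+1)*(N₂+1) ≤ j*(N₂+1) := Nat.mul_le_mul_right _ (by omega)
          have h6 : (J+1)*(N₂+1) = J*(N₂+1)+(N₂+1) := by ring
          have : x (J*(N₂+1)+N₂) < x (j*(N₂+1)) := mono_lt N₁ N₂ x hx _ _ (by omega) (by omega)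
          rw [upt, max_eq_right (by linarith)]
          ring
    · -- B part
      by_cases hjJ : j < J
      · rw [if_pos hjJ]
        have h5 : (j+1)*(N₂+1) ≤ J*(N₂+1) := Nat.mul_le_mul_right _ (by omega)
        have h6 : (j+1)*(N₂+1) = j*(N₂+1)+(N₂+1) := by ring
        have : x (j*(N₂+1)+N₂) ≤ x (J*(N₂+1)) := mono_le N₁ N₂ x hx _ _ (by omega) hmulJ
        rw [wpt, max_eq_left (by linarith)]
      · rw [if_neg hjJ]
        have h5 : J*(N₂+1)+N₂ ≤ j*(N₂+1)+N₂ := by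
          have := Nat.mul_le_mul_right (N₂+1) (show J ≤ j by omega); omega
        have : x (J*(N₂+1)+N₂) ≤ x (j*(N₂+1)+N₂) := mono_le N₁ N₂ x hx _ _ h5 (by omega)
        rw [wpt, max_eq_right (by linarith)]
        ring
  rw [Finset.sum_congr rfl hsum, Finset.sum_add_distrib]
  obtain ⟨N₁', rfl⟩ : ∃ k, N₁ = k + 1 := ⟨N₁-1, by omega⟩
  have hB : (∑ j ∈ Finset.range (N₁'+1), (if j < J then bet (N₁'+1) N₂ x y m j * (t - wpt N₂ x j) else 0))
      = ∑ j ∈ Finset.range J, bet (N₁'+1) N₂ x y m j * (t - wpt N₂ x j) := by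
    rw [← Finset.sum_subset (Finset.range_subset_range.2 (le_of_lt hJ))
      (fun i _ hi => by rw [if_neg (by simpa using hi)])]
    exact Finset.sum_congr rfl (fun i hi => if_pos (Finset.mem_range.mp hi))
  have hA : (∑ j ∈ Finset.range (N₁'+1),
        (if j = 0 then (if J = 0 then alf N₂ x y m 0 * (x N₂ - t) else 0)
          else (if j ≤ J then alf N₂ x y m j * (t - upt N₂ x j) else 0)))
      = (∑ j ∈ Finset.range J, alf N₂ x y m (j+1) * (t - upt N₂ x (j+1)))
        + (if J = 0 then alf N₂ x y m 0 * (x N₂ - t) else 0) := by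
    rw [Finset.sum_range_succ']
    congr 1
    have hJ' : J ≤ N₁' := by omega
    rw [← Finset.sum_subset (Finset.range_subset_range.2 hJ')
      (fun i _ hi => by rw [if_neg (Nat.succ_ne_zero i), if_neg (by simp at hi ⊢; omega)])]
    exact Finset.sum_congr rfl (fun i hi => by
      rw [if_neg (Nat.succ_ne_zero i), if_pos (by simp at hi; omega)])
  rw [hA, hB]
  by_cases hJ0 : J = 0
  · subst hJ0
    simp only [Finset.sum_range_zero, if_pos rfl]
    rw [cst, alf]
    simp only [if_pos rfl, if_true]
    ring
  · rw [if_neg hJ0]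
    have hlin := linid (N₁'+1) N₂ x y m hx J (by omega) t
    rw [show Gt N₂ x y m J = gU N₂ x y m J from if_neg hJ0] at hlin
    linarith

lemma fullP (m : ℕ) (hx : ∀ i : ℕ, i < N₁ * (N₂ + 1) → x i < x (i + 1)) (hN₁ : 0 < N₁) :
    P N₁ N₂ x y m (x (N₁*(N₂+1))) = tgt N₁ N₂ y m := by
  set t := x (N₁*(N₂+1)) with ht
  rw [P, sum_pair]
  have hsum : ∀ j ∈ Finset.range N₁,
      ((if (2*j) % 2 = 0 then alf N₂ x y m ((2*j)/2) else bet N₁ N₂ x y m ((2*j)/2))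
          * max (nu N₂ x (2*j) t) 0
       + (if (2*j+1) % 2 = 0 then alf N₂ x y m ((2*j+1)/2) else bet N₁ N₂ x y m ((2*j+1)/2))
          * max (nu N₂ x (2*j+1) t) 0)
      = ((if j = 0 then 0 else alf N₂ x y m j * (t - upt N₂ x j))
         + bet N₁ N₂ x y m j * (t - wpt N₂ x j)) := by
    intro j hj
    have hjN : j < N₁ := Finset.mem_range.mp hj
    have e0 : (2*j) % 2 = 0 := by omega
    have e1 : (2*j)/2 = j := by omega
    have e2 : ¬((2*j+1) % 2 = 0) := by omega
    have e3 : (2*j+1)/2 = j := by omega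
    have hjmul : j*(N₂+1)+N₂+1 ≤ N₁*(N₂+1) := blk_le N₁ N₂ hjN
    rw [nu, nu, e1, e3, if_pos e0, if_pos e0, if_neg e2, if_neg e2]
    congr 1
    · by_cases hj0 : j = 0
      · subst hj0
        rw [if_pos rfl, if_pos rfl]
        have hN : N₂+1 ≤ N₁*(N₂+1) := Nat.le_mul_of_pos_left _ (by omega)
        have : x N₂ < t := mono_lt N₁ N₂ x hx _ _ (by omega) (le_refl _)
        rw [max_eq_right (by linarith)]
        ring
      · rw [if_neg hj0, if_neg hj0]
        have h5 : j*(N₂+1) ≤ N₁*(N₂+1) := Nat.mul_le_mul_right _ (le_of_lt hjN)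
        have : x (j*(N₂+1)) ≤ t := mono_le N₁ N₂ x hx _ _ h5 (le_refl _)
        rw [upt, max_eq_left (by linarith)]
    · have : x (j*(N₂+1)+N₂) ≤ t := mono_le N₁ N₂ x hx _ _ (by omega) (le_refl _)
      rw [wpt, max_eq_left (by linarith)]
  rw [Finset.sum_congr rfl hsum, Finset.sum_add_distrib]
  obtain ⟨N₁', rfl⟩ : ∃ k, N₁ = k + 1 := ⟨N₁-1, by omega⟩
  rw [Finset.sum_range_succ', Finset.sum_range_succ]
  simp only [if_pos rfl, Nat.succ_ne_zero, if_neg (Nat.succ_ne_zero _), if_false, if_true, add_zero]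
  have hlin := linid (N₁'+1) N₂ x y m hx N₁' (by omega) t
  have hne : t - wpt N₂ x N₁' ≠ 0 := by
    have e : (N₁'+1)*(N₂+1) = N₁'*(N₂+1)+(N₂+1) := by ring
    have : x (N₁'*(N₂+1)+N₂) < t :=
      mono_lt (N₁'+1) N₂ x hx _ _ (by omega) (le_refl _)
    simp only [wpt]; intro h; nlinarith
  have hbet : bet (N₁'+1) N₂ x y m N₁' * (t - wpt N₂ x N₁')
      = tgt (N₁'+1) N₂ y m - ((Gt N₂ x y m N₁').1 * t + (Gt N₂ x y m N₁').2) := by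
    rw [bet, if_pos (by omega : N₁' = (N₁'+1)-1)]
    rw [← ht, div_mul_cancel₀ _ hne]
  rw [hbet]
  linarith

lemma blockPhi (J : ℕ) (hx : ∀ i : ℕ, i < N₁ * (N₂ + 1) → x i < x (i + 1)) (hN₁ : 0 < N₁) (hN₂ : 0 < N₂) (hJ : J < N₁) (t : ℝ)
    (h1 : x (J*(N₂+1)) ≤ t) (h2 : t ≤ x (J*(N₂+1)+N₂)) :
    phi N₁ N₂ x y t = fB N₂ x y J t := by
  obtain ⟨K, rfl⟩ : ∃ k, N₂ = k + 1 := ⟨N₂-1, by omega⟩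
  have hblock := fun m => blockP N₁ (K+1) x y m J hx hN₁ hJ t h1 h2
  rw [phi, Finset.sum_range_succ, sum_pair, Finset.sum_range_succ']
  have hL : ∀ k ∈ Finset.range K,
      ((if (2*(k+1)) % 2 = 0 then (1:ℝ) else -1) * max (P N₁ (K+1) x y (2*(k+1)) t) 0
       + (if (2*(k+1)+1) % 2 = 0 then (1:ℝ) else -1) * max (P N₁ (K+1) x y (2*(k+1)+1) t) 0)
      = hk (K+1) x y J k * max (t - x (J*(K+1+1)+k+1)) 0 := by
    intro k hkk
    have hkK : k < K := Finset.mem_range.mp hkk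
    rw [if_pos (by omega), if_neg (by omega), hblock _, hblock _]
    rw [gU, if_neg (by omega), if_neg (by omega), if_neg (by omega), if_pos (by omega)]
    rw [gU, if_neg (by omega), if_neg (by omega), if_neg (by omega), if_neg (by omega)]
    have e : (2*(k+1)-2)/2 = k := by omega
    have e' : (2*(k+1)+1-2)/2 = k := by omega
    rw [e, e']
    have r1 : ∀ s p : ℝ, max s 0 * t + -(max s 0 * p) = max s 0 * (t - p) :=
      fun s p => by ring
    rw [r1, r1, one_mul, neg_one_mul, ← sub_eq_add_neg, relu_pair]
  have hz : (if (2*(K+1)) % 2 = 0 then (1:ℝ) else -1) * max (P N₁ (K+1) x y (2*(K+1)) t) 0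
      = 0 := by
    rw [if_pos (by omega), hblock _, gU, if_neg (by omega), if_neg (by omega), if_pos rfl]
    norm_num
  have hp0 : ((if (2*0) % 2 = 0 then (1:ℝ) else -1) * max (P N₁ (K+1) x y (2*0) t) 0
       + (if (2*0+1) % 2 = 0 then (1:ℝ) else -1) * max (P N₁ (K+1) x y (2*0+1) t) 0)
      = sl x y (J*(K+1+1)) * t
        + (y (J*(K+1+1)) - sl x y (J*(K+1+1)) * x (J*(K+1+1))) := by
    rw [if_pos (by omega), if_neg (by omega), one_mul, neg_one_mul, ← sub_eq_add_neg]
    norm_num only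
    rw [hblock 0, hblock 1]
    rw [gU, if_pos rfl, gU, if_neg (by omega), if_pos rfl]
    have r2 : -sl x y (J*(K+1+1)) * t + -(y (J*(K+1+1)) - sl x y (J*(K+1+1)) * x (J*(K+1+1)))
        = -(sl x y (J*(K+1+1)) * t + (y (J*(K+1+1)) - sl x y (J*(K+1+1)) * x (J*(K+1+1)))) := by
      ring
    rw [r2, max_sub_max_neg]
  rw [Finset.sum_congr rfl hL, hz, hp0, fB]
  simp only [Nat.add_sub_cancel]
  ring

lemma fclosed (J r : ℕ) (hx : ∀ i : ℕ, i < N₁ * (N₂ + 1) → x i < x (i + 1)) (hJ : J < N₁) (hr : r ≤ N₂ - 1) (t : ℝ)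
    (h1 : x (J*(N₂+1)+r) ≤ t) (h2 : t ≤ x (J*(N₂+1)+r+1)) :
    fB N₂ x y J t = (sl x y (J*(N₂+1)) + ∑ k ∈ Finset.range r, hk N₂ x y J k) * t
      + (y (J*(N₂+1)) - sl x y (J*(N₂+1)) * x (J*(N₂+1))
         - ∑ k ∈ Finset.range r, hk N₂ x y J k * x (J*(N₂+1)+k+1)) := by
  have hblkJ := blk_le N₁ N₂ hJ
  rw [fB]
  have hc : ∀ k ∈ Finset.range (N₂-1),
      hk N₂ x y J k * max (t - x (J*(N₂+1)+k+1)) 0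
      = (if k < r then hk N₂ x y J k * (t - x (J*(N₂+1)+k+1)) else 0) := by
    intro k hkk
    have hkN : k < N₂-1 := Finset.mem_range.mp hkk
    by_cases h : k < r
    · rw [if_pos h]
      have : x (J*(N₂+1)+k+1) ≤ x (J*(N₂+1)+r) := mono_le N₁ N₂ x hx _ _ (by omega) (by omega)
      rw [max_eq_left (by linarith)]
    · rw [if_neg h]
      have : x (J*(N₂+1)+r+1) ≤ x (J*(N₂+1)+k+1) := mono_le N₁ N₂ x hx _ _ (by omega) (by omega)
      rw [max_eq_right (by linarith)]
      ring
  rw [Finset.sum_congr rfl hc]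
  have hrr : (∑ k ∈ Finset.range (N₂-1),
        if k < r then hk N₂ x y J k * (t - x (J*(N₂+1)+k+1)) else 0)
      = ∑ k ∈ Finset.range r, hk N₂ x y J k * (t - x (J*(N₂+1)+k+1)) := by
    rw [← Finset.sum_subset (Finset.range_subset_range.2 hr)
      (fun i _ hi => by rw [if_neg (by simpa using hi)])]
    exact Finset.sum_congr rfl (fun i hi => if_pos (Finset.mem_range.mp hi))
  rw [hrr]
  have hdist : (∑ k ∈ Finset.range r, hk N₂ x y J k * (t - x (J*(N₂+1)+k+1)))
      = (∑ k ∈ Finset.range r, hk N₂ x y J k) * t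
        - ∑ k ∈ Finset.range r, hk N₂ x y J k * x (J*(N₂+1)+k+1) := by
    rw [Finset.sum_mul, ← Finset.sum_sub_distrib]
    exact Finset.sum_congr rfl (fun k _ => by ring)
  rw [hdist]
  ring

lemma fval (J : ℕ) (hx : ∀ i : ℕ, i < N₁ * (N₂ + 1) → x i < x (i + 1)) (hJ : J < N₁) :
    ∀ r, r ≤ N₂ → fB N₂ x y J (x (J*(N₂+1)+r)) = y (J*(N₂+1)+r) := by
  have hblkJ := blk_le N₁ N₂ hJ
  intro r
  induction r with
  | zero =>
    intro _
    have hb1 : x (J*(N₂+1)+0) ≤ x (J*(N₂+1)+0+1) := mono_le N₁ N₂ x hx _ _ (by omega) (by omega)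
    have e0 := fclosed N₁ N₂ x y J 0 hx hJ (by omega) (x (J*(N₂+1)+0)) (le_refl _) hb1
    rw [e0]
    simp only [Finset.sum_range_zero, Nat.add_zero, add_zero, sub_zero]
    ring
  | succ r ih =>
    intro hr1
    have hyr := ih (by omega)
    have hb1 : x (J*(N₂+1)+r) ≤ x (J*(N₂+1)+r+1) := mono_le N₁ N₂ x hx _ _ (by omega) (by omega)
    have e1 := fclosed N₁ N₂ x y J r hx hJ (by omega) (x (J*(N₂+1)+r+1)) hb1 (le_refl _)
    have e2 := fclosed N₁ N₂ x y J r hx hJ (by omega) (x (J*(N₂+1)+r)) (le_refl _) hb1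
    have e3 : (∑ k ∈ Finset.range r, hk N₂ x y J k)
        = sl x y (J*(N₂+1)+r) - sl x y (J*(N₂+1)) := by
      have h4 := Finset.sum_range_sub (fun k => sl x y (J*(N₂+1)+k)) r
      simp only [hk]
      simpa [add_assoc] using h4
    have hne : x (J*(N₂+1)+r+1) - x (J*(N₂+1)+r) ≠ 0 :=
      sub_ne_zero_of_ne (ne_of_gt (mono_lt N₁ N₂ x hx _ _ (by omega) (by omega)))
    have hcancel : sl x y (J*(N₂+1)+r) * (x (J*(N₂+1)+r+1) - x (J*(N₂+1)+r))
        = y (J*(N₂+1)+r+1) - y (J*(N₂+1)+r) := by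
      rw [sl]
      field_simp
    rw [e2] at hyr
    have eidx : J*(N₂+1)+(r+1) = J*(N₂+1)+r+1 := by omega
    rw [eidx, e1, e3]
    rw [e3] at hyr
    linear_combination hyr + hcancel

end lemmas


end PF

/-- Lemma 5.4 (point fitting with two hidden layers): given `N₁(N₂+1)+1` samples with
strictly increasing first coordinates and nonnegative second coordinates, a ReLU FNN with
two hidden layers of widths `2N₁` and `2N₂+1` fits all samples exactly, and is affine on each
sample interval `[x_{i-1}, x_i]` whose index `i` is not a multiple `(N₂+1)j`, `1 ≤ j ≤ N₁`. -/
theorem two_layer_point_fitting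
    (N₁ N₂ : ℕ) (hN₁ : 0 < N₁) (hN₂ : 0 < N₂)
    (x y : ℕ → ℝ)
    (hx : ∀ i : ℕ, i < N₁ * (N₂ + 1) → x i < x (i + 1))
    (hy : ∀ i : ℕ, i ≤ N₁ * (N₂ + 1) → 0 ≤ y i) :
    ∃ φ : ℝ → ℝ,
      TwoHiddenLayerNet 1 (2 * N₁) (2 * N₂ + 1) (fun v => φ (v 0)) ∧
      (∀ i : ℕ, i ≤ N₁ * (N₂ + 1) → φ (x i) = y i) ∧
      (∀ i : ℕ, 1 ≤ i → i ≤ N₁ * (N₂ + 1) →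
        (∀ j : ℕ, 1 ≤ j → j ≤ N₁ → i ≠ (N₂ + 1) * j) →
        ∃ a b : ℝ, ∀ t ∈ Set.Icc (x (i - 1)) (x i), φ t = a * t + b) := by
  classical
  refine ⟨PF.phi N₁ N₂ x y, ?_, ?_, ?_⟩
  · -- network structure
    refine ⟨fun v i => PF.nu N₂ x (i : ℕ) (v 0),
      fun v m => PF.cst N₂ x y (m : ℕ) + ∑ i : Fin (2*N₁),
        (if (i : ℕ) % 2 = 0 then PF.alf N₂ x y (m : ℕ) ((i : ℕ)/2)
          else PF.bet N₁ N₂ x y (m : ℕ) ((i : ℕ)/2)) * v i,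
      fun v _ => ∑ m : Fin (2*N₂+1), (if (m : ℕ) % 2 = 0 then (1:ℝ) else -1) * v m,
      ?_, ?_, ?_, ?_⟩
    · refine ⟨fun i _ => (if (i : ℕ) % 2 = 0 then (if (i : ℕ)/2 = 0 then (-1:ℝ) else 1) else 1),
        fun i => (if (i : ℕ) % 2 = 0 then (if (i : ℕ)/2 = 0 then x N₂ else -(PF.upt N₂ x ((i : ℕ)/2)))
          else -(PF.wpt N₂ x ((i : ℕ)/2))), ?_⟩
      intro v
      funext i
      simp only [Matrix.mulVec, dotProduct, Fin.sum_univ_one, Pi.add_apply, PF.nu]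
      split_ifs <;> ring
    · refine ⟨fun m i => (if (i : ℕ) % 2 = 0 then PF.alf N₂ x y (m : ℕ) ((i : ℕ)/2)
          else PF.bet N₁ N₂ x y (m : ℕ) ((i : ℕ)/2)), fun m => PF.cst N₂ x y (m : ℕ), ?_⟩
      intro v
      funext m
      simp only [Matrix.mulVec, dotProduct, Pi.add_apply]
      rw [add_comm]
    · refine ⟨fun _ m => (if (m : ℕ) % 2 = 0 then (1:ℝ) else -1), fun _ => 0, ?_⟩
      intro v
      funext j
      simp only [Matrix.mulVec, dotProduct, Pi.add_apply, add_zero]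
    · intro v
      have hA1 : ∀ m : ℕ,
          (PF.cst N₂ x y m + ∑ i : Fin (2*N₁),
            (if (i : ℕ) % 2 = 0 then PF.alf N₂ x y m ((i : ℕ)/2)
              else PF.bet N₁ N₂ x y m ((i : ℕ)/2)) * max (PF.nu N₂ x (i : ℕ) (v 0)) 0)
          = PF.P N₁ N₂ x y m (v 0) := by
        intro m
        rw [PF.P]
        congr 1
        exact Fin.sum_univ_eq_sum_range
          (fun i => (if i % 2 = 0 then PF.alf N₂ x y m (i/2)
            else PF.bet N₁ N₂ x y m (i/2)) * max (PF.nu N₂ x i (v 0)) 0) (2*N₁)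
      show PF.phi N₁ N₂ x y (v 0) = _
      rw [PF.phi, ← Fin.sum_univ_eq_sum_range
        (fun m => (if m % 2 = 0 then (1:ℝ) else -1) * max (PF.P N₁ N₂ x y m (v 0)) 0) (2*N₂+1)]
      exact Finset.sum_congr rfl (fun m _ => by rw [← hA1 (m : ℕ)])
  · -- interpolation
    intro i hi
    rcases eq_or_lt_of_le hi with heq | hlt
    · subst heq
      rw [PF.phi]
      have hfull := fun m => PF.fullP N₁ N₂ x y m hx hN₁
      have hterm : ∀ m ∈ Finset.range (2*N₂+1),
          (if m % 2 = 0 then (1:ℝ) else -1) * max (PF.P N₁ N₂ x y m (x (N₁*(N₂+1)))) 0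
          = (if m = 0 then max (y (N₁*(N₂+1))) 0
              else if m = 1 then -max (-y (N₁*(N₂+1))) 0 else 0) := by
        intro m _
        rw [hfull m, PF.tgt]
        by_cases h0 : m = 0
        · subst h0; norm_num
        · by_cases h1 : m = 1
          · subst h1; norm_num
          · rw [if_neg h0, if_neg h1, if_neg h0, if_neg h1]
            norm_num
      rw [Finset.sum_congr rfl hterm]
      rw [← Finset.sum_subset (Finset.range_subset_range.2 (by omega : 2 ≤ 2*N₂+1))
        (fun i _ hi2 => by
          have h2 : 2 ≤ i := by simp at hi2; omega
          rw [if_neg (by omega), if_neg (by omega)])]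
      rw [Finset.sum_range_succ, Finset.sum_range_one]
      norm_num
      have := PF.max_sub_max_neg (y (N₁*(N₂+1)))
      linarith
    · obtain ⟨J, r, h1, hr⟩ : ∃ J r, J*(N₂+1)+r = i ∧ r < N₂+1 :=
        ⟨i/(N₂+1), i%(N₂+1), by rw [mul_comm]; exact Nat.div_add_mod i (N₂+1),
          Nat.mod_lt _ (by omega)⟩
      subst h1
      have hJ : J < N₁ := by
        by_contra hc
        push_neg at hc
        have h5 := Nat.mul_le_mul_right (N₂+1) hc
        omega
      have hb := PF.blk_le N₁ N₂ hJ
      have hph := PF.blockPhi N₁ N₂ x y J hx hN₁ hN₂ hJ (x (J*(N₂+1)+r))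
        (PF.mono_le N₁ N₂ x hx _ _ (by omega) (by omega))
        (PF.mono_le N₁ N₂ x hx _ _ (by omega) (by omega))
      rw [hph]
      exact PF.fval N₁ N₂ x y J hx hJ r (by omega)
  · -- piecewise affine
    intro i h1i hiM hnm
    obtain ⟨J, r, h1, hr⟩ : ∃ J r, J*(N₂+1)+r = i ∧ r < N₂+1 :=
      ⟨i/(N₂+1), i%(N₂+1), by rw [mul_comm]; exact Nat.div_add_mod i (N₂+1),
        Nat.mod_lt _ (by omega)⟩
    subst h1
    have hr0 : r ≠ 0 := by
      intro h0
      subst h0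
      have hJ1 : 1 ≤ J := by
        rcases Nat.eq_zero_or_pos J with h | h
        · subst h; simp at h1i
        · exact h
      have hJle : J ≤ N₁ := by
        by_contra hc
        push_neg at hc
        have h5 := Nat.mul_le_mul_right (N₂+1) (show N₁+1 ≤ J by omega)
        have e4 : (N₁+1)*(N₂+1) = N₁*(N₂+1)+(N₂+1) := by ring
        omega
      exact hnm J hJ1 hJle (by rw [mul_comm]; omega)
    have hJ : J < N₁ := by
      have hneq : J*(N₂+1)+r ≠ (N₂+1)*N₁ := hnm N₁ hN₁ (le_refl _)
      have e : (N₂+1)*N₁ = N₁*(N₂+1) := Nat.mul_comm _ _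
      by_contra hc
      push_neg at hc
      have h5 := Nat.mul_le_mul_right (N₂+1) hc
      omega
    have hb := PF.blk_le N₁ N₂ hJ
    refine ⟨PF.sl x y (J*(N₂+1)) + ∑ k ∈ Finset.range (r-1), PF.hk N₂ x y J k,
      y (J*(N₂+1)) - PF.sl x y (J*(N₂+1)) * x (J*(N₂+1))
        - ∑ k ∈ Finset.range (r-1), PF.hk N₂ x y J k * x (J*(N₂+1)+k+1), ?_⟩
    intro t ht
    obtain ⟨ht1, ht2⟩ := ht
    have e2 : J*(N₂+1)+r-1 = J*(N₂+1)+(r-1) := by omega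
    rw [e2] at ht1
    have e3 : J*(N₂+1)+(r-1)+1 = J*(N₂+1)+r := by omega
    have hph := PF.blockPhi N₁ N₂ x y J hx hN₁ hN₂ hJ t
      (le_trans (PF.mono_le N₁ N₂ x hx _ _ (by omega) (by omega)) ht1)
      (le_trans ht2 (PF.mono_le N₁ N₂ x hx _ _ (by omega) (by omega)))
    rw [hph]
    have hfc := PF.fclosed N₁ N₂ x y J (r-1) hx hJ (by omega) t ht1 (by rw [e3]; exact ht2)
    rw [hfc]
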